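/- Let m ≤ n be nonnegative integers, let f : {0,1}^n × {0,1}^d → {0,1}^r be a strong lossless (m, ε)-condenser, and let Z be a flat distribution on {0,1}^n whose support has size exactly 2^m. Then for at least (1 − 2√ε)·2^d of the seeds u ∈ {0,1}^d, we have Pr_{z ∼ Z}[∃ z' ∈ supp(Z), z' ≠ z, f(z', u) = f(z, u)] ≤ √ε. (In particular, when f(·, u) is F_2-linear with matrix H_u, for every such seed u the error probability of syndrome decoding of the code {x : H_u·x = 0} over the additive-noise channel with noise distribution Z is at most √ε.) -/

import Mathlib

/-- Statistical distance between two distributions on a finite set. -/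
noncomputable def statDist {Ω : Type*} [Fintype Ω] (p q : Ω → ℝ) : ℝ :=
  (∑ x, |p x - q x|) / 2

/-- `p` is a probability distribution on a finite set. -/
def IsDist {Ω : Type*} [Fintype Ω] (p : Ω → ℝ) : Prop :=
  (∀ x, 0 ≤ p x) ∧ (∑ x, p x) = 1

/-- `p` has min-entropy at least `b` (bits). -/
def minEntropyGe {Ω : Type*} [Fintype Ω] (p : Ω → ℝ) (b : ℝ) : Prop :=
  ∀ x, p x ≤ (2 : ℝ) ^ (-b)

/-- Joint distribution of `(Z, f(X, Z))` where `X ∼ p` and `Z` is uniform. -/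
noncomputable def jointDist {A S B : Type*} [Fintype A] [Fintype S] [DecidableEq B]
    (p : A → ℝ) (f : A → S → B) : S × B → ℝ :=
  fun sb => (Fintype.card S : ℝ)⁻¹ * ∑ x, if f x sb.1 = sb.2 then p x else 0

/-- Strong `k →_ε k'` condenser. -/
def IsStrongCondenser {A S B : Type*} [Fintype A] [Fintype S] [Fintype B] [DecidableEq B]
    (f : A → S → B) (k k' ε : ℝ) : Prop :=
  ∀ p : A → ℝ, IsDist p → minEntropyGe p k →
    ∃ q : S × B → ℝ, IsDist q ∧
      minEntropyGe q (Real.logb 2 (Fintype.card S) + k') ∧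
      statDist (jointDist p f) q ≤ ε

open Classical in
/-- For most seeds of a strong lossless condenser, collisions on the
support of a flat source are rare. -/
theorem stmt18 (n dd r m : ℕ) (hmn : m ≤ n)
    (f : (Fin n → Bool) → (Fin dd → Bool) → Fin r → Bool)
    (ε : ℝ) (hf : IsStrongCondenser f (m : ℝ) (m : ℝ) ε)
    (A : Finset (Fin n → Bool)) (hA : A.card = 2 ^ m) :
    (1 - 2 * Real.sqrt ε) * 2 ^ dd ≤
      ((Finset.univ.filter (fun u : Fin dd → Bool =>
        ((A.filter (fun z => ∃ z' ∈ A, z' ≠ z ∧ f z' u = f z u)).card : ℝ)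
          ≤ Real.sqrt ε * 2 ^ m)).card : ℝ) := by
  classical
  set p : (Fin n → Bool) → ℝ := fun x => if x ∈ A then ((2:ℝ)^m)⁻¹ else 0 with hp
  have h2m : (0:ℝ) < (2:ℝ)^m := by positivity
  have h2d : (0:ℝ) < (2:ℝ)^dd := by positivity
  have hpdist : IsDist p := by
    constructor
    · intro x; simp only [hp]; split <;> positivity
    · simp only [hp]
      rw [Finset.sum_ite_mem, Finset.univ_inter, Finset.sum_const, hA]
      rw [nsmul_eq_mul]
      push_cast
      field_simp
  have hpow : (2:ℝ) ^ (-(m:ℝ)) = ((2:ℝ)^m)⁻¹ := by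
    rw [Real.rpow_neg (by norm_num), Real.rpow_natCast]
  have hpent : minEntropyGe p (m:ℝ) := by
    intro x
    rw [hpow]
    simp only [hp]; split
    · exact le_rfl
    · positivity
  obtain ⟨q, hqdist, hqent, hdist⟩ := hf p hpdist hpent
  -- card of seed space
  have hcardS : (Fintype.card (Fin dd → Bool) : ℝ) = 2^dd := by
    simp [Fintype.card_fun]
  -- min entropy bound on q in usable form
  have hqb : ∀ sb, q sb ≤ ((2:ℝ)^dd)⁻¹ * ((2:ℝ)^m)⁻¹ := by
    intro sb
    have := hqent sb
    rw [hcardS] at this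
    have hlog : Real.logb 2 ((2:ℝ)^dd) = dd := by
      rw [show ((2:ℝ)^dd) = (2:ℝ)^(dd:ℝ) from (Real.rpow_natCast 2 dd).symm,
        Real.logb_rpow] <;> norm_num
    rw [hlog] at this
    calc q sb ≤ (2:ℝ) ^ (-((dd:ℝ) + m)) := this
      _ = ((2:ℝ)^dd)⁻¹ * ((2:ℝ)^m)⁻¹ := by
        rw [Real.rpow_neg (by norm_num), Real.rpow_add (by norm_num),
          Real.rpow_natCast, Real.rpow_natCast, mul_inv]
  set N : (Fin dd → Bool) → (Fin r → Bool) → ℕ :=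
    fun u b => (A.filter (fun x => f x u = b)).card with hN
  have hJ : ∀ u b, jointDist p f (u, b) = ((2:ℝ)^dd)⁻¹ * (((2:ℝ)^m)⁻¹ * (N u b : ℝ)) := by
    intro u b
    simp only [jointDist, hcardS]
    congr 1
    simp only [hp]
    rw [← Finset.sum_filter]
    rw [Finset.sum_ite_mem]
    rw [Finset.sum_const, nsmul_eq_mul, mul_comm]
    congr 2
    rw [hN]
    congr 1
    ext x
    simp [and_comm]
  -- J sums to 1
  have hJsum : ∑ sb : (Fin dd → Bool) × (Fin r → Bool), jointDist p f sb = 1 := by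
    rw [Fintype.sum_prod_type]
    have h1 : ∀ u : Fin dd → Bool, ∑ b : Fin r → Bool, jointDist p f (u, b)
        = (Fintype.card (Fin dd → Bool) : ℝ)⁻¹ := by
      intro u
      simp only [jointDist]
      rw [← Finset.mul_sum, Finset.sum_comm]
      have hx : ∀ x, (∑ b : Fin r → Bool, if f x u = b then p x else 0) = p x := by
        intro x; rw [Finset.sum_ite_eq]; simp
      simp only [hx, hpdist.2, mul_one]
    simp only [h1]
    rw [Finset.sum_const, nsmul_eq_mul, Finset.card_univ, mul_inv_cancel₀]
    rw [hcardS]; positivity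
  -- pointwise lower bound on the positive part of J - q
  have habs : ∀ sb : (Fin dd → Bool) × (Fin r → Bool),
      ((2:ℝ)^dd)⁻¹ * ((2:ℝ)^m)⁻¹ * ((N sb.1 sb.2 - 1 : ℕ) : ℝ)
        ≤ max (jointDist p f sb - q sb) 0 := by
    rintro ⟨u, b⟩
    dsimp only
    rcases Nat.eq_zero_or_pos (N u b) with h0 | h1
    · simp only [h0]
      simpa using le_max_right (jointDist p f (u, b) - q (u, b)) 0
    · have hc : ((N u b - 1 : ℕ) : ℝ) = (N u b : ℝ) - 1 := by
        have h1' : (1:ℕ) ≤ N u b := h1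
        push_cast [h1']; ring
      refine le_trans ?_ (le_max_left _ _)
      rw [hc, hJ u b]
      nlinarith [hqb (u, b)]
  have hstat_nonneg : 0 ≤ statDist (jointDist p f) q := by
    unfold statDist
    have : 0 ≤ ∑ x : (Fin dd → Bool) × (Fin r → Bool), |jointDist p f x - q x| :=
      Finset.sum_nonneg fun x _ => abs_nonneg _
    linarith
  have hε : 0 ≤ ε := le_trans hstat_nonneg hdist
  have hptw : ∀ x : ℝ, max x 0 = (|x| + x) / 2 := by
    intro x
    rcases le_or_gt x 0 with h | h
    · rw [max_eq_right h, abs_of_nonpos h]; ring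
    · rw [max_eq_left h.le, abs_of_pos h]; ring
  have hmaxsum : ∑ sb : (Fin dd → Bool) × (Fin r → Bool),
      max (jointDist p f sb - q sb) 0 = statDist (jointDist p f) q := by
    have hzero : ∑ sb : (Fin dd → Bool) × (Fin r → Bool),
        (jointDist p f sb - q sb) = 0 := by
      rw [Finset.sum_sub_distrib, hJsum, hqdist.2, sub_self]
    simp only [hptw]
    rw [← Finset.sum_div, Finset.sum_add_distrib, hzero, add_zero]
    rfl
  -- sum bound
  have hSsum : ((2:ℝ)^dd)⁻¹ * ((2:ℝ)^m)⁻¹ *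
      ∑ sb : (Fin dd → Bool) × (Fin r → Bool), ((N sb.1 sb.2 - 1 : ℕ) : ℝ) ≤ ε := by
    rw [Finset.mul_sum]
    calc ∑ sb : (Fin dd → Bool) × (Fin r → Bool),
          ((2:ℝ)^dd)⁻¹ * ((2:ℝ)^m)⁻¹ * ((N sb.1 sb.2 - 1 : ℕ) : ℝ)
        ≤ ∑ sb : (Fin dd → Bool) × (Fin r → Bool), max (jointDist p f sb - q sb) 0 :=
          Finset.sum_le_sum fun sb _ => habs sb
      _ = statDist (jointDist p f) q := hmaxsum
      _ ≤ ε := hdist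
  -- collision count bound for each seed
  have hCollb : ∀ u : Fin dd → Bool,
      ((A.filter (fun z => ∃ z' ∈ A, z' ≠ z ∧ f z' u = f z u)).card : ℝ)
        ≤ 2 * ∑ b : Fin r → Bool, ((N u b - 1 : ℕ) : ℝ) := by
    intro u
    have hnat : (A.filter (fun z => ∃ z' ∈ A, z' ≠ z ∧ f z' u = f z u)).card
        ≤ 2 * ∑ b : Fin r → Bool, (N u b - 1) := by
      rw [Finset.card_eq_sum_card_fiberwise
        (f := fun z => f z u) (t := Finset.univ) (fun x _ => Finset.mem_univ _),
        Finset.mul_sum]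
      refine Finset.sum_le_sum fun b _ => ?_
      by_cases hb : ((A.filter (fun z => ∃ z' ∈ A, z' ≠ z ∧ f z' u = f z u)).filter
          (fun z => f z u = b)).Nonempty
      · obtain ⟨z, hz⟩ := hb
        simp only [Finset.mem_filter] at hz
        obtain ⟨⟨hzA, z', hz'A, hne, hfz⟩, hfb⟩ := hz
        have h2 : 2 ≤ N u b := by
          have : 1 < (A.filter (fun x => f x u = b)).card :=
            Finset.one_lt_card.mpr
              ⟨z', Finset.mem_filter.mpr ⟨hz'A, hfz.trans hfb⟩,
               z, Finset.mem_filter.mpr ⟨hzA, hfb⟩, hne⟩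
          simp only [hN]; omega
        have hle : ((A.filter (fun z => ∃ z' ∈ A, z' ≠ z ∧ f z' u = f z u)).filter
            (fun z => f z u = b)).card ≤ N u b :=
          Finset.card_le_card (Finset.filter_subset_filter _ (Finset.filter_subset _ _))
        omega
      · rw [Finset.not_nonempty_iff_eq_empty] at hb
        simp [hb]
    calc ((A.filter (fun z => ∃ z' ∈ A, z' ≠ z ∧ f z' u = f z u)).card : ℝ)
        ≤ ((2 * ∑ b : Fin r → Bool, (N u b - 1) : ℕ) : ℝ) := by exact_mod_cast hnat
      _ = 2 * ∑ b : Fin r → Bool, ((N u b - 1 : ℕ) : ℝ) := by push_cast; ring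
  -- the bad set
  set Bad : Finset (Fin dd → Bool) := Finset.univ.filter (fun u : Fin dd → Bool =>
      ¬ (((A.filter (fun z => ∃ z' ∈ A, z' ≠ z ∧ f z' u = f z u)).card : ℝ)
          ≤ Real.sqrt ε * 2 ^ m)) with hBad
  have hcards : (Finset.univ.filter (fun u : Fin dd → Bool =>
      ((A.filter (fun z => ∃ z' ∈ A, z' ≠ z ∧ f z' u = f z u)).card : ℝ)
        ≤ Real.sqrt ε * 2 ^ m)).card + Bad.card = 2 ^ dd := by
    rw [hBad, Finset.card_filter_add_card_filter_not, Finset.card_univ]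
    simp [Fintype.card_fun]
  -- total sum S
  have hsplit : ∑ u : Fin dd → Bool, (2 * ∑ b : Fin r → Bool, ((N u b - 1 : ℕ) : ℝ))
      = 2 * ∑ sb : (Fin dd → Bool) × (Fin r → Bool), ((N sb.1 sb.2 - 1 : ℕ) : ℝ) := by
    rw [Fintype.sum_prod_type, Finset.mul_sum]
  have hsumColl : ∑ u : Fin dd → Bool,
      ((A.filter (fun z => ∃ z' ∈ A, z' ≠ z ∧ f z' u = f z u)).card : ℝ)
        ≤ 2 * ε * 2 ^ dd * 2 ^ m := by
    have h1 : ∑ u : Fin dd → Bool,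
        ((A.filter (fun z => ∃ z' ∈ A, z' ≠ z ∧ f z' u = f z u)).card : ℝ)
          ≤ 2 * ∑ sb : (Fin dd → Bool) × (Fin r → Bool), ((N sb.1 sb.2 - 1 : ℕ) : ℝ) := by
      rw [← hsplit]
      exact Finset.sum_le_sum fun u _ => hCollb u
    have h2 : ∑ sb : (Fin dd → Bool) × (Fin r → Bool), ((N sb.1 sb.2 - 1 : ℕ) : ℝ)
        ≤ ε * 2 ^ dd * 2 ^ m := by
      have hrw : ∑ sb : (Fin dd → Bool) × (Fin r → Bool), ((N sb.1 sb.2 - 1 : ℕ) : ℝ)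
          = ((2:ℝ)^dd * 2^m) * (((2:ℝ)^dd)⁻¹ * ((2:ℝ)^m)⁻¹ *
            ∑ sb : (Fin dd → Bool) × (Fin r → Bool), ((N sb.1 sb.2 - 1 : ℕ) : ℝ)) := by
        field_simp
      rw [hrw]
      calc ((2:ℝ)^dd * 2^m) * (((2:ℝ)^dd)⁻¹ * ((2:ℝ)^m)⁻¹ *
            ∑ sb : (Fin dd → Bool) × (Fin r → Bool), ((N sb.1 sb.2 - 1 : ℕ) : ℝ))
          ≤ ((2:ℝ)^dd * 2^m) * ε := mul_le_mul_of_nonneg_left hSsum (by positivity)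
        _ = ε * 2 ^ dd * 2 ^ m := by ring
    linarith
  have hBadcard : (Bad.card : ℝ) ≤ 2 * Real.sqrt ε * 2 ^ dd := by
    rcases eq_or_lt_of_le (Real.sqrt_nonneg ε) with hs0 | hs0
    · -- sqrt ε = 0, hence ε = 0 and there are no collisions at all
      have hε0 : ε = 0 := by
        have h := Real.sqrt_eq_zero'.mp hs0.symm
        linarith
      have hall : ∀ u : Fin dd → Bool,
          ((A.filter (fun z => ∃ z' ∈ A, z' ≠ z ∧ f z' u = f z u)).card : ℝ) ≤ 0 := by
        intro u
        have hnn : ∀ v : Fin dd → Bool, v ∈ Finset.univ →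
            (0:ℝ) ≤ ((A.filter (fun z => ∃ z' ∈ A, z' ≠ z ∧ f z' v = f z v)).card : ℝ) :=
          fun v _ => Nat.cast_nonneg _
        have := Finset.single_le_sum hnn (Finset.mem_univ u)
        rw [hε0] at hsumColl
        linarith
      have : Bad = ∅ := by
        rw [hBad, Finset.filter_eq_empty_iff]
        intro u _
        push_neg
        calc ((A.filter (fun z => ∃ z' ∈ A, z' ≠ z ∧ f z' u = f z u)).card : ℝ)
            ≤ 0 := hall u
          _ ≤ Real.sqrt ε * 2 ^ m := by positivity
      rw [this]
      simp only [Finset.card_empty, Nat.cast_zero]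
      positivity
    · -- sqrt ε > 0 : Markov
      have hmark : (Bad.card : ℝ) * (Real.sqrt ε * 2 ^ m)
          ≤ ∑ u ∈ Bad, ((A.filter (fun z => ∃ z' ∈ A, z' ≠ z ∧ f z' u = f z u)).card : ℝ) := by
        rw [← nsmul_eq_mul]
        refine Finset.card_nsmul_le_sum Bad _ _ ?_
        intro u hu
        rw [hBad, Finset.mem_filter] at hu
        exact (not_le.mp hu.2).le
      have hsub : ∑ u ∈ Bad, ((A.filter (fun z => ∃ z' ∈ A, z' ≠ z ∧ f z' u = f z u)).card : ℝ)
          ≤ ∑ u : Fin dd → Bool, ((A.filter (fun z => ∃ z' ∈ A, z' ≠ z ∧ f z' u = f z u)).card : ℝ) :=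
        Finset.sum_le_sum_of_subset_of_nonneg (Finset.subset_univ _)
          (fun u _ _ => Nat.cast_nonneg _)
      have heq : 2 * ε * 2 ^ dd * 2 ^ m = (2 * Real.sqrt ε * 2 ^ dd) * (Real.sqrt ε * 2 ^ m) := by
        have hss : Real.sqrt ε * Real.sqrt ε = ε := Real.mul_self_sqrt hε
        linear_combination (-(2 * (2:ℝ)^dd * 2^m)) * hss
      have : (Bad.card : ℝ) * (Real.sqrt ε * 2 ^ m)
          ≤ (2 * Real.sqrt ε * 2 ^ dd) * (Real.sqrt ε * 2 ^ m) := by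
        rw [← heq]; linarith
      exact le_of_mul_le_mul_right this (by positivity)
  have hGcast : ((Finset.univ.filter (fun u : Fin dd → Bool =>
      ((A.filter (fun z => ∃ z' ∈ A, z' ≠ z ∧ f z' u = f z u)).card : ℝ)
        ≤ Real.sqrt ε * 2 ^ m)).card : ℝ) + (Bad.card : ℝ) = 2 ^ dd := by
    exact_mod_cast hcards
  nlinarith [h2d]
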